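/- If (f, g) is a crossed pair in Homeo₊(I), then the subgroup generated by f and g contains a free semigroup on two generators. -/

import Mathlib

noncomputable section

/-- The unit interval `[0,1] ⊆ ℝ`. -/
abbrev unitI : Set ℝ := Set.Icc (0:ℝ) 1

/-- Ambient group: bijections of the unit interval. -/
abbrev IntervalMap : Type := Equiv.Perm ↥unitI

/-- The extension of `σ` to `ℝ`, by the identity outside `[0,1]`. -/
def toReal (σ : IntervalMap) : ℝ → ℝ :=
  fun x => if h : x ∈ unitI then (σ ⟨x, h⟩ : ℝ) else x

/-- `σ` is an orientation-preserving homeomorphism of `[0,1]` (a strictly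
increasing bijection of `[0,1]`; such a map automatically fixes `0` and `1`
and is continuous). -/
def IsOPH (σ : IntervalMap) : Prop := StrictMono fun x : ↥unitI => (σ x : ℝ)

/-- `σ` extends to a `C¹` function on `[0,1]`. -/
def IsC1On (σ : IntervalMap) : Prop := ContDiffOn ℝ 1 (toReal σ) unitI

/-- `σ` is an orientation-preserving `C¹` diffeomorphism of `[0,1]`. -/
def IsOPD (σ : IntervalMap) : Prop := IsOPH σ ∧ IsC1On σ ∧ IsC1On σ⁻¹

/-- `Γ` is a subgroup of `Diff₊(I)`. -/
def DiffSubgroup (Γ : Subgroup IntervalMap) : Prop := ∀ γ ∈ Γ, IsOPD γ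

/-- `Γ` is a subgroup of `Homeo₊(I)`. -/
def HomeoSubgroup (Γ : Subgroup IntervalMap) : Prop := ∀ γ ∈ Γ, IsOPH γ

/-- The set of fixed points of `σ` in the open interval `(0,1)`. -/
def FixPts (σ : IntervalMap) : Set ↥unitI :=
  {x : ↥unitI | σ x = x ∧ 0 < (x : ℝ) ∧ (x : ℝ) < 1}

/-- Every non-identity element of `Γ` has finitely many fixed points in `(0,1)`. -/
def FinFix (Γ : Subgroup IntervalMap) : Prop := ∀ γ ∈ Γ, γ ≠ 1 → (FixPts γ).Finite

/-- The `C⁰`-norm `‖σ‖ = sup_{x ∈ [0,1]} |σ(x) - x|`. -/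
def C0norm (σ : IntervalMap) : ℝ := ⨆ x : ↥unitI, |(σ x : ℝ) - (x : ℝ)|

/-- `Γ` is locally transitive. -/
def LocTrans (Γ : Subgroup IntervalMap) : Prop :=
  ∀ p : ↥unitI, 0 < (p : ℝ) → (p : ℝ) < 1 → ∀ ε : ℝ, 0 < ε →
    ∃ γ ∈ Γ, C0norm γ < ε ∧ γ p ≠ p

/-- `Γ` is irreducible: no global fixed point in `(0,1)`. -/
def Irred (Γ : Subgroup IntervalMap) : Prop :=
  ¬ ∃ p : ↥unitI, 0 < (p : ℝ) ∧ (p : ℝ) < 1 ∧ ∀ γ ∈ Γ, γ p = p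

/-- The group `Aff₊(ℝ)` of orientation-preserving affine maps `x ↦ a x + b`,
`a > 0`, as a subgroup of the permutation group of `ℝ`. -/
def AffPlus : Subgroup (Equiv.Perm ℝ) where
  carrier := {e | ∃ a b : ℝ, 0 < a ∧ ∀ x, e x = a * x + b}
  one_mem' := ⟨1, 0, one_pos, fun x => by simp⟩
  mul_mem' := by
    rintro e f ⟨a, b, ha, he⟩ ⟨c, d, hc, hf⟩
    refine ⟨a * c, a * d + b, mul_pos ha hc, fun x => ?_⟩
    rw [Equiv.Perm.mul_apply, hf, he]; ring
  inv_mem' := by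
    rintro e ⟨a, b, ha, he⟩
    refine ⟨a⁻¹, -b / a, by positivity, fun y => ?_⟩
    apply e.injective
    rw [show e (e⁻¹ y) = y from e.apply_symm_apply y, he]
    field_simp
    try ring

/-- `G` embeds into (i.e. is isomorphic to a subgroup of) `Aff₊(ℝ)`. -/
def EmbedsInAff (G : Type*) [Group G] : Prop :=
  ∃ φ : G →* ↥AffPlus, Function.Injective φ

/-- `G` embeds into `Aff₊(ℝ)ⁿ` for some `n ≥ 1`. -/
def EmbedsInAffPow (G : Type*) [Group G] : Prop :=
  ∃ n : ℕ, 1 ≤ n ∧ ∃ φ : G →* (Fin n → ↥AffPlus), Function.Injective φ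

/-- `G` has infinite girth: for every `m` there is a finite generating set `S`
such that no non-trivial reduced word of length at most `m` in `S ∪ S⁻¹`
represents the identity. -/
def HasInfiniteGirth (G : Type*) [Group G] : Prop :=
  ∀ m : ℕ, ∃ S : Finset G, Subgroup.closure (S : Set G) = ⊤ ∧
    ∀ w : FreeGroup {x // x ∈ S}, w ≠ 1 →
      (∃ l : List ({x // x ∈ S} × Bool), l.length ≤ m ∧ FreeGroup.mk l = w) →
      FreeGroup.lift (fun s => (s : G)) w ≠ 1

/-- `a` and `b` generate a free semigroup on two generators: distinct
non-empty positive words in `a, b` give distinct elements. -/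
def FreeSemigroupPair {G : Type*} [Group G] (a b : G) : Prop :=
  Function.Injective
    ⇑(FreeSemigroup.lift (fun x : Bool => if x then a else b) : FreeSemigroup Bool →ₙ* G)

/-- `g < f` in the biorder: `g(x) < f(x)` near `0`. -/
def ltNear (g f : IntervalMap) : Prop :=
  ∃ δ : ℝ, 0 < δ ∧ ∀ x : ↥unitI, 0 < (x : ℝ) → (x : ℝ) < δ → (g x : ℝ) < (f x : ℝ)

/-- `g ≤ f` in the biorder. -/
def leNear (g f : IntervalMap) : Prop := ltNear g f ∨ g = f

/-- `g << f`: `g` is infinitesimal with respect to `f`, i.e. `gⁿ < f` for all `n ∈ ℤ`. -/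
def Infinitesimal (g f : IntervalMap) : Prop := ∀ n : ℤ, ltNear (g ^ n) f

/-- `(f, g)` is a crossed pair on the interval `(a,b)`: `f` fixes `a` and `b`
but no point strictly between them, while `g` maps `a` or `b` into `(a,b)`. -/
def CrossedOn (f g : IntervalMap) (a b : ↥unitI) : Prop :=
  f a = a ∧ f b = b ∧ (∀ x : ↥unitI, (a : ℝ) < x → (x : ℝ) < b → f x ≠ x) ∧
  (((a : ℝ) < (g a : ℝ) ∧ (g a : ℝ) < b) ∨ ((a : ℝ) < (g b : ℝ) ∧ (g b : ℝ) < b))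

/-- `(f, g)` is a crossed pair. -/
def CrossedPair (f g : IntervalMap) : Prop :=
  ∃ a b : ↥unitI, (a : ℝ) < b ∧ (CrossedOn f g a b ∨ CrossedOn g f a b)

/-- The auxiliary point configuration used in weak transitivity:
`extPt γ p 0 = 0`, `extPt γ p j = γ(pⱼ)` for `1 ≤ j ≤ k` (here `pⱼ = p ⟨j-1⟩`
in `0`-indexed notation), and `extPt γ p (k+1) = 1`. -/
def extPt (γ : IntervalMap) {k : ℕ} (p : Fin k → ↥unitI) (j : ℕ) : ℝ :=
  if j = 0 then 0 else if h : j - 1 < k then (γ (p ⟨j - 1, h⟩) : ℝ) else 1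

/-- `Γ` is weakly `k`-transitive. -/
def WeaklyKTrans (Γ : Subgroup IntervalMap) (k : ℕ) : Prop :=
  ∀ g ∈ Γ, ∀ p : Fin k → ↥unitI,
    (∀ i, 0 < (p i : ℝ) ∧ (p i : ℝ) < 1) →
    (StrictMono fun i => (p i : ℝ)) →
    ∀ ε : ℝ, 0 < ε →
      ∃ γ ∈ Γ, extPt γ p k < ε ∧
        ∀ i : Fin k,
          extPt γ p i.val < (g (γ (p i)) : ℝ) ∧
            (g (γ (p i)) : ℝ) < extPt γ p (i.val + 2)

/-- `Γ` is weakly transitive. -/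
def WeakTrans (Γ : Subgroup IntervalMap) : Prop := ∀ k : ℕ, 1 ≤ k → WeaklyKTrans Γ k

theorem Equiv.Perm.apply_inv_self {α : Type*} (f : Equiv.Perm α) (x : α) : f (f⁻¹ x) = x :=
  f.apply_symm_apply x

namespace PP

variable {G : Type*} [Group G] (φ : Bool → G)

lemma foldl_eq (h : G) (t : List Bool) :
    t.foldl (fun a b => a * φ b) h = h * (t.map φ).prod := by
  induction t generalizing h with
  | nil => simp
  | cons x t ih => simp [ih, mul_assoc]

lemma lift_eq (w : FreeSemigroup Bool) :
    (FreeSemigroup.lift φ) w = ((w.head :: w.tail).map φ).prod := by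
  show w.tail.foldl (fun a b => a * φ b) (φ w.head) = _
  rw [foldl_eq]
  simp

variable {T : Type*} (α β : Equiv.Perm T)

def φP : Bool → Equiv.Perm T := fun x => if x then α else β

lemma prod_cons_apply (σ : Equiv.Perm T) (l : List (Equiv.Perm T)) (x : T) :
    ((σ :: l).prod) x = σ (l.prod x) := by
  simp [List.prod_cons]

lemma mem_union {A B : Set T} (hα : ∀ x ∈ A ∪ B, α x ∈ A) (hβ : ∀ x ∈ A ∪ B, β x ∈ B) :
    ∀ (l : List Bool) (x : T), x ∈ A ∪ B → ((l.map (φP α β)).prod) x ∈ A ∪ B := by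
  intro l
  induction l with
  | nil => intro x hx; simpa using hx
  | cons h t ih =>
    intro x hx
    rw [List.map_cons, prod_cons_apply]
    rcases h with _ | _
    · exact Set.mem_union_right _ (hβ _ (ih x hx))
    · exact Set.mem_union_left _ (hα _ (ih x hx))

lemma mem_head {A B : Set T} (hα : ∀ x ∈ A ∪ B, α x ∈ A) (hβ : ∀ x ∈ A ∪ B, β x ∈ B) :
    ∀ (h : Bool) (t : List Bool) (x : T), x ∈ A ∪ B →
      (((h :: t).map (φP α β)).prod) x ∈ (if h then A else B) := by
  intro h t x hx
  rw [List.map_cons, prod_cons_apply]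
  rcases h with _ | _
  · simpa [φP] using hβ _ (mem_union α β hα hβ t x hx)
  · simpa [φP] using hα _ (mem_union α β hα hβ t x hx)

lemma list_inj {A B : Set T} (hA : A.Nonempty) (hB : B.Nonempty) (hd : Disjoint A B)
    (hα : ∀ x ∈ A ∪ B, α x ∈ A) (hβ : ∀ x ∈ A ∪ B, β x ∈ B) :
    ∀ (l₁ l₂ : List Bool), l₁ ≠ [] → l₂ ≠ [] →
      (l₁.map (φP α β)).prod = (l₂.map (φP α β)).prod → l₁ = l₂ := by
  intro l₁
  induction l₁ with
  | nil => intro l₂ h; exact absurd rfl h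
  | cons h₁ t₁ ih =>
    rintro (_ | ⟨h₂, t₂⟩) _ hne2 heq
    · exact absurd rfl hne2
    · -- compare heads
      by_cases hh : h₁ = h₂
      · subst hh
        have hcan : (t₁.map (φP α β)).prod = (t₂.map (φP α β)).prod := by
          have := heq
          rw [List.map_cons, List.map_cons, List.prod_cons, List.prod_cons] at this
          exact mul_left_cancel this
        have key : ∀ (t : List Bool), t ≠ [] → (t.map (φP α β)).prod = 1 → False := by
          rintro (_ | ⟨h', t''⟩) hne hone
          · exact absurd rfl hne
          · rcases h' with _|_
            · obtain ⟨x, hx⟩ := hA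
              have m := mem_head α β hα hβ false t'' x (Set.mem_union_left _ hx)
              rw [hone] at m
              simp only [if_neg Bool.false_ne_true] at m
              exact hd.ne_of_mem hx m rfl
            · obtain ⟨x, hx⟩ := hB
              have m := mem_head α β hα hβ true t'' x (Set.mem_union_right _ hx)
              rw [hone] at m
              simp only [if_pos rfl] at m
              exact hd.ne_of_mem m hx rfl
        rcases eq_or_ne t₁ [] with ht₁' | ht₁' <;> rcases eq_or_ne t₂ [] with ht₂' | ht₂'
        · subst ht₁'; subst ht₂'; rfl
        · subst ht₁'; exact (key t₂ ht₂' (by simpa using hcan.symm)).elim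
        · subst ht₂'; exact (key t₁ ht₁' (by simpa using hcan)).elim
        · rw [ih t₂ ht₁' ht₂' hcan]
      · exfalso
        obtain ⟨x, hx⟩ := hA
        have hx' : x ∈ A ∪ B := Set.mem_union_left _ hx
        have m1 := mem_head α β hα hβ h₁ t₁ x hx'
        have m2 := mem_head α β hα hβ h₂ t₂ x hx'
        rw [heq] at m1
        rcases h₁ with _|_ <;> rcases h₂ with _|_ <;> simp_all
        · exact hd.ne_of_mem m2 m1 rfl
        · exact hd.ne_of_mem m1 m2 rfl

lemma pingpong {A B : Set T} (hA : A.Nonempty) (hB : B.Nonempty) (hd : Disjoint A B)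
    (hα : ∀ x ∈ A ∪ B, α x ∈ A) (hβ : ∀ x ∈ A ∪ B, β x ∈ B) :
    FreeSemigroupPair α β := by
  intro w₁ w₂ heq
  have e1 := lift_eq (φP α β) w₁
  have e2 := lift_eq (φP α β) w₂
  have heq' : ((w₁.head :: w₁.tail).map (φP α β)).prod
      = ((w₂.head :: w₂.tail).map (φP α β)).prod := by
    rw [← e1, ← e2]; exact heq
  have := list_inj α β hA hB hd hα hβ (w₁.head :: w₁.tail) (w₂.head :: w₂.tail)
    (List.cons_ne_nil _ _) (List.cons_ne_nil _ _) heq'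
  cases w₁; cases w₂
  simpa using this

end PP

namespace S14

lemma smInv {T : Type*} [LinearOrder T] (f : Equiv.Perm T) (hf : StrictMono ⇑f) :
    StrictMono ⇑f⁻¹ := by
  intro x y h
  by_contra H
  push_neg at H
  have := hf.monotone H
  simp only [Equiv.Perm.apply_inv_self] at this
  exact absurd h (not_lt.mpr this)

lemma smPow {T : Type*} [LinearOrder T] (f : Equiv.Perm T) (hf : StrictMono ⇑f) (n : ℕ) :
    StrictMono ⇑(f ^ n) := by
  induction n with
  | zero => simpa using strictMono_id
  | succ n ih =>
    have : (f ^ (n+1) : Equiv.Perm T) = f ^ n * f := pow_succ f n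
    rw [this]
    intro x y h
    exact ih (hf h)

lemma fixPow {T : Type*} (f : Equiv.Perm T) {a : T} (ha : f a = a) (n : ℕ) :
    (f ^ n) a = a := by
  induction n with
  | zero => rfl
  | succ n ih => rw [pow_succ, Equiv.Perm.mul_apply, ha, ih]

lemma fixInv {T : Type*} (f : Equiv.Perm T) {a : T} (ha : f a = a) : f⁻¹ a = a := by
  apply f.injective
  rw [Equiv.Perm.apply_inv_self, ha]

lemma pow_succ_apply {T : Type*} (f : Equiv.Perm T) (n : ℕ) (x : T) :
    (f ^ (n+1)) x = f ((f ^ n) x) := by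
  rw [pow_succ', Equiv.Perm.mul_apply]

-- the "down" dynamics lemma
lemma down (f : IntervalMap) (hf : StrictMono ⇑f) (a b : ↥unitI)
    (hfa : f a = a) (hfix : ∀ x, a < x → x < b → x < f x) :
    ∀ x, a < x → x < b → ∀ t, a < t → ∃ n : ℕ, ((f⁻¹) ^ n) x < t := by
  intro x hax hxb t hat
  by_contra H
  push_neg at H
  set u : ℕ → ℝ := fun n => ((((f⁻¹) ^ n) x : ↥unitI) : ℝ) with hu
  have hlb : ∀ n, (t : ℝ) ≤ u n := fun n => Subtype.coe_le_coe.mpr (H n)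
  have hbdd : BddBelow (Set.range u) := ⟨(t : ℝ), by rintro _ ⟨n, rfl⟩; exact hlb n⟩
  have hne : (Set.range u).Nonempty := ⟨u 0, 0, rfl⟩
  set s : ℝ := sInf (Set.range u) with hs
  have hts : (t : ℝ) ≤ s := le_csInf hne (by rintro _ ⟨n, rfl⟩; exact hlb n)
  have hsx : s ≤ (x : ℝ) := by
    have : u 0 = (x : ℝ) := by simp [hu]; rfl
    calc s ≤ u 0 := csInf_le hbdd ⟨0, rfl⟩
    _ = (x : ℝ) := this
  have hsmem : s ∈ unitI := Set.mem_Icc.mpr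
    ⟨le_trans (Set.mem_Icc.mp t.2).1 hts, le_trans hsx (Set.mem_Icc.mp x.2).2⟩
  set S : ↥unitI := ⟨s, hsmem⟩ with hS
  have hSle : ∀ n, S ≤ ((f⁻¹) ^ n) x := fun n =>
    Subtype.coe_le_coe.mp (csInf_le hbdd ⟨n, rfl⟩)
  have hfS : f S ≤ S := by
    apply Subtype.coe_le_coe.mp
    apply le_csInf hne
    rintro _ ⟨m, rfl⟩
    have h1 : f S ≤ f (((f⁻¹) ^ (m+1)) x) := hf.monotone (hSle (m+1))
    have h2 : f (((f⁻¹) ^ (m+1)) x) = ((f⁻¹) ^ m) x := by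
      rw [pow_succ_apply, Equiv.Perm.apply_inv_self]
    rw [h2] at h1
    exact Subtype.coe_le_coe.mpr h1
  have haS : a < S := lt_of_lt_of_le hat (Subtype.coe_le_coe.mp hts)
  have hSb : S < b := lt_of_le_of_lt (Subtype.coe_le_coe.mp hsx) hxb
  exact absurd (hfix S haS hSb) (not_lt.mpr hfS)

-- sign constancy helper
lemma sign_helper (f : IntervalMap) (hf : StrictMono ⇑f) (a b : ↥unitI)
    (hfix : ∀ z, a < z → z < b → f z ≠ z)
    (x y : ↥unitI) (hax : a < x) (hyb : y < b) (hxy : x < y)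
    (hxf : x < f x) (hyf : f y < y) : False := by
  set S : Set ℝ := {z : ℝ | (x : ℝ) ≤ z ∧ z ≤ (y : ℝ) ∧
      ∀ hz : z ∈ unitI, (⟨z, hz⟩ : ↥unitI) < f ⟨z, hz⟩} with hSdef
  have hxS : (x : ℝ) ∈ S := by
    refine ⟨le_refl _, le_of_lt (Subtype.coe_lt_coe.mpr hxy), fun hz => ?_⟩
    have : (⟨(x : ℝ), hz⟩ : ↥unitI) = x := Subtype.ext rfl
    rw [this]; exact hxf
  have hne : S.Nonempty := ⟨_, hxS⟩
  have hbdd : BddAbove S := ⟨(y : ℝ), fun z hz => hz.2.1⟩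
  set s : ℝ := sSup S with hs
  have hxs : (x : ℝ) ≤ s := le_csSup hbdd hxS
  have hsy : s ≤ (y : ℝ) := csSup_le hne (fun z hz => hz.2.1)
  have hsmem : s ∈ unitI := Set.mem_Icc.mpr
    ⟨le_trans (Set.mem_Icc.mp x.2).1 hxs, le_trans hsy (Set.mem_Icc.mp y.2).2⟩
  set σ : ↥unitI := ⟨s, hsmem⟩ with hσ
  have hxσ : x ≤ σ := Subtype.coe_le_coe.mp hxs
  have hσy : σ ≤ y := Subtype.coe_le_coe.mp hsy
  have hσf : σ ≤ f σ := by
    apply Subtype.coe_le_coe.mp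
    apply csSup_le hne
    intro z hz
    have hzI : z ∈ unitI := Set.mem_Icc.mpr
      ⟨le_trans (Set.mem_Icc.mp x.2).1 hz.1, le_trans hz.2.1 (Set.mem_Icc.mp y.2).2⟩
    have h1 : (⟨z, hzI⟩ : ↥unitI) < f ⟨z, hzI⟩ := hz.2.2 hzI
    have hzs : z ≤ s := le_csSup hbdd hz
    have h2 : f (⟨z, hzI⟩ : ↥unitI) ≤ f σ := hf.monotone (Subtype.coe_le_coe.mp hzs)
    calc z ≤ (f (⟨z, hzI⟩ : ↥unitI) : ℝ) := le_of_lt (Subtype.coe_lt_coe.mpr h1)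
    _ ≤ (f σ : ℝ) := Subtype.coe_le_coe.mpr h2
  -- σ is strictly below y
  have hσy' : σ < y := by
    rcases lt_or_eq_of_le hσy with h | h
    · exact h
    · exfalso
      have : σ < f σ := lt_of_le_of_ne hσf
        (fun e => hfix σ (lt_of_lt_of_le hax hxσ) (lt_of_le_of_lt hσy hyb) e.symm)
      rw [h] at this
      exact absurd hyf (not_lt.mpr (le_of_lt this))
  have hσfσ : σ < f σ := lt_of_le_of_ne hσf
    (fun e => hfix σ (lt_of_lt_of_le hax hxσ) (lt_of_lt_of_le hσy' (le_of_lt hyb)) e.symm)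
  set z : ↥unitI := min (f σ) y with hz
  have hσz : σ < z := lt_min hσfσ hσy'
  have hzS : (z : ℝ) ∈ S := by
    refine ⟨le_trans hxs (le_of_lt (Subtype.coe_lt_coe.mpr hσz)),
      Subtype.coe_le_coe.mpr (min_le_right _ _), fun hzI => ?_⟩
    have hzz : (⟨(z : ℝ), hzI⟩ : ↥unitI) = z := Subtype.ext rfl
    rw [hzz]
    have : f σ < f z := hf hσz
    exact lt_of_le_of_lt (min_le_left _ _) this
  have : (z : ℝ) ≤ s := le_csSup hbdd hzS
  exact absurd (Subtype.coe_lt_coe.mpr hσz) (not_lt.mpr this)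

lemma sign_cases (f : IntervalMap) (hf : StrictMono ⇑f) (a b : ↥unitI)
    (hfix : ∀ z, a < z → z < b → f z ≠ z) :
    (∀ x, a < x → x < b → x < f x) ∨ (∀ x, a < x → x < b → f x < x) := by
  by_contra H
  push_neg at H
  obtain ⟨⟨y, hay, hyb, hyf⟩, ⟨x, hax, hxb, hxf⟩⟩ := H
  have hyf' : f y < y := lt_of_le_of_ne hyf (hfix y hay hyb)
  have hxf' : x < f x := lt_of_le_of_ne hxf (Ne.symm (hfix x hax hxb))
  rcases lt_trichotomy x y with h | h | h
  · exact sign_helper f hf a b hfix x y hax hyb h hxf' hyf'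
  · rw [h] at hxf'
    exact absurd hyf' (not_lt.mpr (le_of_lt hxf'))
  · -- use f⁻¹ : f⁻¹ y > y and f⁻¹ x < x, with y < x
    have hfi : StrictMono ⇑f⁻¹ := smInv f hf
    have hfixi : ∀ z, a < z → z < b → f⁻¹ z ≠ z := by
      intro z h1 h2 e
      exact hfix z h1 h2 (by conv_lhs => rw [← e]; rw [Equiv.Perm.apply_inv_self])
    have h1 : y < f⁻¹ y := by
      have : f (f⁻¹ y) = y := Equiv.Perm.apply_inv_self f y
      by_contra Hc
      push_neg at Hc
      have := hf.monotone Hc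
      rw [Equiv.Perm.apply_inv_self] at this
      exact absurd hyf' (not_lt.mpr this)
    have h2 : f⁻¹ x < x := by
      by_contra Hc
      push_neg at Hc
      have := hf.monotone Hc
      rw [Equiv.Perm.apply_inv_self] at this
      exact absurd hxf' (not_lt.mpr this)
    exact sign_helper f⁻¹ hfi a b hfixi y x hay hxb h h1 h2


lemma lt_inv_apply (f : IntervalMap) (hf : StrictMono ⇑f) {x : ↥unitI} (h : f x < x) :
    x < f⁻¹ x := by
  by_contra H
  push_neg at H
  have := hf.monotone H
  rw [Equiv.Perm.apply_inv_self] at this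
  exact absurd h (not_lt.mpr this)

lemma inv_apply_lt (f : IntervalMap) (hf : StrictMono ⇑f) {x : ↥unitI} (h : x < f x) :
    f⁻¹ x < x := by
  by_contra H
  push_neg at H
  have := hf.monotone H
  rw [Equiv.Perm.apply_inv_self] at this
  exact absurd h (not_lt.mpr this)

lemma core' (F g : IntervalMap) (hF : StrictMono ⇑F) (hg : StrictMono ⇑g)
    (a b : ↥unitI) (hab : a < b) (hFa : F a = a) (hFb : F b = b)
    (hup : ∀ x, a < x → x < b → x < F x)
    (hga1 : a < g a) (hga2 : g a < b) :
    ∃ m k : ℕ, FreeSemigroupPair ((F⁻¹) ^ m * g) ((F⁻¹) ^ k) := by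
  have ha0 : (0:ℝ) ≤ (a:ℝ) := (Set.mem_Icc.mp a.2).1
  have hb1 : (b:ℝ) ≤ 1 := (Set.mem_Icc.mp b.2).2
  have hgab : ((g a : ↥unitI) : ℝ) < (b : ℝ) := Subtype.coe_lt_coe.mpr hga2
  have haga : (a : ℝ) < ((g a : ↥unitI) : ℝ) := Subtype.coe_lt_coe.mpr hga1
  have hga0 : (0:ℝ) ≤ ((g a : ↥unitI) : ℝ) := (Set.mem_Icc.mp (g a).2).1
  -- midpoint of (g a) and b
  set w : ↥unitI := ⟨(((g a : ↥unitI) : ℝ) + (b:ℝ))/2,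
    Set.mem_Icc.mpr ⟨by linarith, by linarith⟩⟩ with hw
  have hcw : g a < w := Subtype.coe_lt_coe.mp (by show ((g a : ↥unitI):ℝ) < _; simp [hw]; linarith)
  have hwb : w < b := Subtype.coe_lt_coe.mp (by show _ < (b:ℝ); simp [hw]; linarith)
  -- midpoint of a and b
  have hab' : (a:ℝ) < (b:ℝ) := Subtype.coe_lt_coe.mpr hab
  set mh : ↥unitI := ⟨((a:ℝ) + (b:ℝ))/2, Set.mem_Icc.mpr ⟨by linarith, by linarith⟩⟩ with hmh
  have hamh : a < mh := Subtype.coe_lt_coe.mp (by show (a:ℝ) < _; simp [hmh]; linarith)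
  have hmhb : mh < b := Subtype.coe_lt_coe.mp (by show _ < (b:ℝ); simp [hmh]; linarith)
  set p : ↥unitI := min (g⁻¹ w) mh with hp
  have hgiw : a < g⁻¹ w := by
    have h1 : g a < g (g⁻¹ w) := by rw [Equiv.Perm.apply_inv_self]; exact hcw
    exact hg.lt_iff_lt.mp h1
  have hap : a < p := lt_min hgiw hamh
  have hpb : p < b := lt_of_le_of_lt (min_le_right _ _) hmhb
  have hgpb : g p < b := by
    have h1 : g p ≤ g (g⁻¹ w) := hg.monotone (min_le_left _ _)
    rw [Equiv.Perm.apply_inv_self] at h1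
    exact lt_of_le_of_lt h1 hwb
  have hagp : a < g p := lt_trans hga1 (hg hap)
  -- dynamics
  obtain ⟨m, hm⟩ := down F hF a b hFa hup (g p) hagp hgpb p hap
  have hFi : StrictMono ⇑(F⁻¹) := smInv F hF
  have hsmFm : StrictMono ⇑((F⁻¹)^m) := smPow F⁻¹ hFi m
  have hfixm : ((F⁻¹)^m) a = a := fixPow F⁻¹ (fixInv F hFa) m
  have hamc : a < ((F⁻¹)^m) (g a) := by
    have := hsmFm hga1
    rwa [hfixm] at this
  obtain ⟨k, hk⟩ := down F hF a b hFa hup p hap hpb (((F⁻¹)^m) (g a)) hamc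
  have hsmFk : StrictMono ⇑((F⁻¹)^k) := smPow F⁻¹ hFi k
  have hfixk : ((F⁻¹)^k) a = a := fixPow F⁻¹ (fixInv F hFa) k
  set A : Set ↥unitI := Set.Icc (((F⁻¹)^m) (g a)) (((F⁻¹)^m) (g p)) with hA
  set B : Set ↥unitI := Set.Icc a (((F⁻¹)^k) p) with hB
  have hAne : A.Nonempty := Set.nonempty_Icc.mpr (hsmFm.monotone (hg.monotone (le_of_lt hap)))
  have hBne : B.Nonempty := by
    apply Set.nonempty_Icc.mpr
    have := hsmFk hap
    rw [hfixk] at this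
    exact le_of_lt this
  have hdisj : Disjoint A B := by
    rw [Set.disjoint_left]
    intro x hxA hxB
    exact absurd (lt_of_le_of_lt (le_trans hxA.1 hxB.2) hk) (lt_irrefl _)
  -- invariance: (F⁻¹)^n p stays in (a, p]
  have hinv : ∀ n : ℕ, a < ((F⁻¹)^n) p ∧ ((F⁻¹)^n) p ≤ p := by
    intro n
    induction n with
    | zero => exact ⟨by simpa using hap, by simp⟩
    | succ n ih =>
      have hyb : ((F⁻¹)^n) p < b := lt_of_le_of_lt ih.2 hpb
      have h1 : a < F⁻¹ (((F⁻¹)^n) p) := by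
        have := hFi ih.1
        rwa [fixInv F hFa] at this
      have h2 : F⁻¹ (((F⁻¹)^n) p) < ((F⁻¹)^n) p :=
        inv_apply_lt F hF (hup _ ih.1 hyb)
      rw [pow_succ_apply]
      exact ⟨h1, le_trans (le_of_lt h2) ih.2⟩
  have hsub : A ∪ B ⊆ Set.Icc a p := by
    apply Set.union_subset
    · exact Set.Icc_subset_Icc (le_of_lt hamc) (le_of_lt hm)
    · exact Set.Icc_subset_Icc le_rfl (hinv k).2
  have hα : ∀ x ∈ A ∪ B, ((F⁻¹)^m * g) x ∈ A := by
    intro x hx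
    have hx' := hsub hx
    rw [Equiv.Perm.mul_apply]
    exact ⟨hsmFm.monotone (hg.monotone hx'.1), hsmFm.monotone (hg.monotone hx'.2)⟩
  have hβ : ∀ x ∈ A ∪ B, ((F⁻¹)^k) x ∈ B := by
    intro x hx
    have hx' := hsub hx
    constructor
    · have := hsmFk.monotone hx'.1
      rwa [hfixk] at this
    · exact hsmFk.monotone hx'.2
  exact ⟨m, k, PP.pingpong _ _ hAne hBne hdisj hα hβ⟩

lemma core (f g : IntervalMap) (hf : StrictMono ⇑f) (hg : StrictMono ⇑g)
    (a b : ↥unitI) (hab : a < b) (hfa : f a = a) (hfb : f b = b)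
    (hfix : ∀ x, a < x → x < b → f x ≠ x)
    (hga1 : a < g a) (hga2 : g a < b) :
    ∃ α ∈ Subgroup.closure {f, g}, ∃ β ∈ Subgroup.closure {f, g}, FreeSemigroupPair α β := by
  have hfmem : f ∈ Subgroup.closure {f, g} :=
    Subgroup.subset_closure (Set.mem_insert _ _)
  have hgmem : g ∈ Subgroup.closure {f, g} :=
    Subgroup.subset_closure (Set.mem_insert_of_mem _ rfl)
  rcases sign_cases f hf a b hfix with hup | hdn
  · obtain ⟨m, k, hpair⟩ := core' f g hf hg a b hab hfa hfb hup hga1 hga2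
    exact ⟨(f⁻¹)^m * g, mul_mem (pow_mem (inv_mem hfmem) m) hgmem,
      (f⁻¹)^k, pow_mem (inv_mem hfmem) k, hpair⟩
  · have hfi : StrictMono ⇑(f⁻¹) := smInv f hf
    have hup' : ∀ x, a < x → x < b → x < f⁻¹ x := fun x h1 h2 =>
      lt_inv_apply f hf (hdn x h1 h2)
    obtain ⟨m, k, hpair⟩ := core' f⁻¹ g hfi hg a b hab (fixInv f hfa) (fixInv f hfb)
      hup' hga1 hga2
    exact ⟨(f⁻¹⁻¹)^m * g, mul_mem (pow_mem (inv_mem (inv_mem hfmem)) m) hgmem,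
      (f⁻¹⁻¹)^k, pow_mem (inv_mem (inv_mem hfmem)) k, hpair⟩

def flipI : Equiv.Perm ↥unitI where
  toFun x := ⟨1 - x.val, Set.mem_Icc.mpr
    ⟨by linarith [(Set.mem_Icc.mp x.2).2], by linarith [(Set.mem_Icc.mp x.2).1]⟩⟩
  invFun x := ⟨1 - x.val, Set.mem_Icc.mpr
    ⟨by linarith [(Set.mem_Icc.mp x.2).2], by linarith [(Set.mem_Icc.mp x.2).1]⟩⟩
  left_inv x := Subtype.ext (by simp)
  right_inv x := Subtype.ext (by simp)

lemma flip_inv : flipI⁻¹ = flipI := Equiv.ext fun x => rfl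

lemma flip_flip (x : ↥unitI) : flipI (flipI x) = x := Subtype.ext (by simp [flipI])

lemma flip_anti {x y : ↥unitI} (h : x < y) : flipI y < flipI x := by
  apply Subtype.coe_lt_coe.mp
  show (1:ℝ) - y.val < 1 - x.val
  have := Subtype.coe_lt_coe.mpr h
  linarith [this]

lemma pair_transfer {G H : Type*} [Group G] [Group H] (φ : G →* H) (α β : G)
    (h : FreeSemigroupPair (φ α) (φ β)) : FreeSemigroupPair α β := by
  have key : ∀ w, (FreeSemigroup.lift (fun x : Bool => if x then φ α else φ β)) w
      = φ ((FreeSemigroup.lift (fun x : Bool => if x then α else β)) w) := by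
    intro w
    induction w using FreeSemigroup.recOnMul with
    | ih1 x => cases x <;> simp
    | ih2 x y hx hy => rw [map_mul, map_mul, map_mul, hx, hy]
  intro w₁ w₂ he
  apply h
  rw [key, key, he]

lemma mainOn (f g : IntervalMap) (hf : StrictMono ⇑f) (hg : StrictMono ⇑g)
    (a b : ↥unitI) (hab : a < b) (hc : CrossedOn f g a b) :
    ∃ α ∈ Subgroup.closure {f, g}, ∃ β ∈ Subgroup.closure {f, g},
      FreeSemigroupPair α β := by
  obtain ⟨hfa, hfb, hfix', hor⟩ := hc
  have hfix : ∀ x, a < x → x < b → f x ≠ x := fun x h1 h2 =>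
    hfix' x (Subtype.coe_lt_coe.mpr h1) (Subtype.coe_lt_coe.mpr h2)
  rcases hor with ⟨h1, h2⟩ | ⟨h1, h2⟩
  · exact core f g hf hg a b hab hfa hfb hfix
      (Subtype.coe_lt_coe.mp h1) (Subtype.coe_lt_coe.mp h2)
  · -- mirror case : a < g b < b
    have hgb1 : a < g b := Subtype.coe_lt_coe.mp h1
    have hgb2 : g b < b := Subtype.coe_lt_coe.mp h2
    set r : IntervalMap := flipI with hr
    set f' : IntervalMap := r * f * r⁻¹ with hf'def
    set g' : IntervalMap := r * g * r⁻¹ with hg'def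
    have happf : ∀ x, f' x = r (f (r x)) := by
      intro x
      rw [hf'def, Equiv.Perm.mul_apply, Equiv.Perm.mul_apply, flip_inv]
    have happg : ∀ x, g' x = r (g (r x)) := by
      intro x
      rw [hg'def, Equiv.Perm.mul_apply, Equiv.Perm.mul_apply, flip_inv]
    have hrr : ∀ x, r (r x) = x := flip_flip
    have hsf' : StrictMono ⇑f' := by
      intro x y h
      rw [happf, happf]
      exact flip_anti (hf (flip_anti h))
    have hsg' : StrictMono ⇑g' := by
      intro x y h
      rw [happg, happg]
      exact flip_anti (hg (flip_anti h))
    have ha'b' : r b < r a := flip_anti hab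
    have hf'a : f' (r b) = r b := by rw [happf, hrr, hfb]
    have hf'b : f' (r a) = r a := by rw [happf, hrr, hfa]
    have hfix'' : ∀ x, r b < x → x < r a → f' x ≠ x := by
      intro x hx1 hx2 e
      have e' : f (r x) = r x := by
        have := congrArg (⇑r) (happf x ▸ e)
        rwa [hrr] at this
      have hb' : r x < b := by
        have := flip_anti hx1
        rwa [hrr] at this
      have ha' : a < r x := by
        have := flip_anti hx2
        rwa [hrr] at this
      exact hfix (r x) ha' hb' e'
    have hg'1 : r b < g' (r b) := by
      rw [happg, hrr]
      exact flip_anti hgb2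
    have hg'2 : g' (r b) < r a := by
      rw [happg, hrr]
      exact flip_anti hgb1
    obtain ⟨α', hα', β', hβ', hpair⟩ :=
      core f' g' hsf' hsg' (r b) (r a) ha'b' hf'a hf'b hfix'' hg'1 hg'2
    -- transfer back through conjugation
    set ψ : IntervalMap ≃* IntervalMap := MulAut.conj r with hψ
    have hψf : ψ f = f' := rfl
    have hψg : ψ g = g' := rfl
    have hcl : Subgroup.closure ({f', g'} : Set IntervalMap)
        = Subgroup.map ψ.toMonoidHom (Subgroup.closure {f, g}) := by
      rw [MonoidHom.map_closure, Set.image_pair]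
      have e1 : ψ.toMonoidHom f = f' := by
        simp only [hψ, MulEquiv.coe_toMonoidHom, MulAut.conj_apply, hf'def]
      have e2 : ψ.toMonoidHom g = g' := by
        simp only [hψ, MulEquiv.coe_toMonoidHom, MulAut.conj_apply, hg'def]
      rw [e1, e2]
    rw [hcl] at hα' hβ'
    obtain ⟨α, hα, hψα⟩ := Subgroup.mem_map.mp hα'
    obtain ⟨β, hβ, hψβ⟩ := Subgroup.mem_map.mp hβ'
    refine ⟨α, hα, β, hβ, pair_transfer ψ.toMonoidHom α β ?_⟩
    show FreeSemigroupPair (ψ α) (ψ β)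
    rw [show ψ α = α' from hψα, show ψ β = β' from hψβ]
    exact hpair

theorem final (f g : IntervalMap)
    (hf : StrictMono fun x : ↥unitI => ((f x : ↥unitI) : ℝ))
    (hg : StrictMono fun x : ↥unitI => ((g x : ↥unitI) : ℝ))
    (hcross : ∃ a b : ↥unitI, (a : ℝ) < b ∧ (CrossedOn f g a b ∨ CrossedOn g f a b)) :
    ∃ a ∈ Subgroup.closure {f, g}, ∃ b ∈ Subgroup.closure {f, g},
      FreeSemigroupPair a b := by
  have hf' : StrictMono ⇑f := fun x y h => Subtype.coe_lt_coe.mp (hf h)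
  have hg' : StrictMono ⇑g := fun x y h => Subtype.coe_lt_coe.mp (hg h)
  obtain ⟨a, b, hab, hc⟩ := hcross
  have hab' : a < b := Subtype.coe_lt_coe.mp hab
  rcases hc with hc | hc
  · exact mainOn f g hf' hg' a b hab' hc
  · have h := mainOn g f hg' hf' a b hab' hc
    rwa [show ({g, f} : Set IntervalMap) = {f, g} from Set.pair_comm g f] at h

end S14

theorem stmt14 (f g : IntervalMap) (hf : IsOPH f) (hg : IsOPH g)
    (hcross : CrossedPair f g) :
    ∃ a ∈ Subgroup.closure {f, g}, ∃ b ∈ Subgroup.closure {f, g},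
      FreeSemigroupPair a b :=
  S14.final f g hf hg hcross

end
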